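/- Let A be a 2×2 complex matrix whose symmetric part Aˢ := (A + Aᵀ)/2 has rank 1. Then there exists exactly one real number q ≥ 0 for which there exist λ ∈ ℂ and a 2×2 unitary matrix U such that the matrix with rows (1, q) and (−q, 0) equals λ Uᵀ A U. Furthermore, if A is not symmetric, then there exists an invertible 2×2 complex matrix T with Tᵀ A T equal to the matrix with rows (1, 1) and (−1, 0). -/

import Mathlib

open Matrix

private lemma stmt15_congr_key (a b c : ℂ) (U : Matrix (Fin 2) (Fin 2) ℂ) :
    Uᵀ * !![a^2, a*b + c; a*b - c, b^2] * U =
      !![(U 0 0 * a + U 1 0 * b)^2,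
          (U 0 0 * a + U 1 0 * b) * (U 0 1 * a + U 1 1 * b) + c * U.det;
          (U 0 0 * a + U 1 0 * b) * (U 0 1 * a + U 1 1 * b) - c * U.det,
          (U 0 1 * a + U 1 1 * b)^2] := by
  ext i j
  fin_cases i <;> fin_cases j <;>
    simp [Matrix.mul_apply, Fin.sum_univ_two, Matrix.det_fin_two] <;> ring

private lemma stmt15_aux_unitary (a b e : ℂ) (n : ℝ)
    (he : e * (starRingEnd ℂ) e = 1)
    (hn : ((n:ℂ)) * n = (starRingEnd ℂ) a * a + (starRingEnd ℂ) b * b)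
    (hn0 : (n:ℂ) ≠ 0) :
    !![(starRingEnd ℂ) a / n, -(b*e)/n; (starRingEnd ℂ) b / n, a*e/n]
      ∈ Matrix.unitaryGroup (Fin 2) ℂ := by
  rw [Matrix.mem_unitaryGroup_iff']
  show _ᴴ * _ = _
  ext i j
  fin_cases i <;> fin_cases j <;>
    simp only [Matrix.mul_apply, Fin.sum_univ_two, Matrix.conjTranspose_apply, Matrix.one_apply,
      Matrix.cons_val', Matrix.cons_val_zero, Matrix.cons_val_one, Matrix.head_cons,
      Matrix.head_fin_const, Matrix.empty_val', Matrix.cons_val_fin_one, map_div₀, Matrix.of_apply,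
      Fin.zero_eta, Fin.mk_one, Fin.isValue, if_true, Fin.mk.injEq, Fin.reduceEq, Complex.star_def, if_false,
      _root_.map_mul, _root_.map_neg, Complex.conj_ofReal, Complex.conj_conj] <;>
    field_simp <;>
    (first
      | linear_combination -hn
      | linear_combination ((starRingEnd ℂ) a * a + (starRingEnd ℂ) b * b) * he - hn
      | ring)

private lemma stmt15_decomp (A : Matrix (Fin 2) (Fin 2) ℂ)
    (hA : (((1 : ℂ) / 2) • (A + Aᵀ)).rank = 1) :
    ∃ a b c : ℂ, (a ≠ 0 ∨ b ≠ 0) ∧ A = !![a^2, a*b + c; a*b - c, b^2] := by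
  classical
  set S : Matrix (Fin 2) (Fin 2) ℂ := ((1:ℂ)/2) • (A + Aᵀ) with hSdef
  have hS0 : S ≠ 0 := by
    intro h; rw [h] at hA; simp [Matrix.rank_zero] at hA
  have hSdet : S.det = 0 := by
    by_contra h
    have h2 := Matrix.rank_of_isUnit S
      ((Matrix.isUnit_iff_isUnit_det S).mpr (isUnit_iff_ne_zero.mpr h))
    rw [hA] at h2
    simp at h2
  have e00 : S 0 0 = A 0 0 := by
    simp [hSdef, Matrix.smul_apply, Matrix.add_apply, Matrix.transpose_apply]; ring
  have e01 : S 0 1 = (1/2) * (A 0 1 + A 1 0) := by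
    simp [hSdef, Matrix.smul_apply, Matrix.add_apply, Matrix.transpose_apply]; ring
  have e10 : S 1 0 = (1/2) * (A 0 1 + A 1 0) := by
    simp [hSdef, Matrix.smul_apply, Matrix.add_apply, Matrix.transpose_apply]; ring
  have e11 : S 1 1 = A 1 1 := by
    simp [hSdef, Matrix.smul_apply, Matrix.add_apply, Matrix.transpose_apply]; ring
  have hdet2 : A 0 0 * A 1 1 = ((A 0 1 + A 1 0)/2)^2 := by
    have h := hSdet
    rw [Matrix.det_fin_two, e00, e01, e10, e11] at h
    linear_combination h
  by_cases h0 : A 0 0 = 0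
  · have hr : A 0 1 + A 1 0 = 0 := by
      have h2 : ((A 0 1 + A 1 0)/2)^2 = 0 := by rw [← hdet2, h0, zero_mul]
      have h3 := pow_eq_zero_iff (n := 2) (by norm_num) |>.mp h2
      linear_combination 2 * h3
    have h11 : A 1 1 ≠ 0 := by
      intro h
      apply hS0
      rw [Matrix.eta_fin_two S, e00, e01, e10, e11, h0, h, hr]
      norm_num
      ext i j
      fin_cases i <;> fin_cases j <;> simp
    obtain ⟨b, hb⟩ := IsAlgClosed.exists_pow_nat_eq (A 1 1) (n := 2) two_pos
    obtain ⟨c, hc⟩ : ∃ c : ℂ, c = (A 0 1 - A 1 0)/2 := ⟨_, rfl⟩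
    refine ⟨0, b, c, Or.inr (fun hb0 => h11 (by rw [← hb, hb0]; ring)), ?_⟩
    have g1 : A 0 0 = (0:ℂ)^2 := by rw [h0]; ring
    have g2 : A 0 1 = 0 * b + c := by rw [hc]; linear_combination (1/2 : ℂ) * hr
    have g3 : A 1 0 = 0 * b - c := by rw [hc]; linear_combination (1/2 : ℂ) * hr
    have g4 : A 1 1 = b^2 := hb.symm
    conv_lhs => rw [Matrix.eta_fin_two A, g1, g2, g3, g4]
  · obtain ⟨a, ha⟩ := IsAlgClosed.exists_pow_nat_eq (A 0 0) (n := 2) two_pos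
    have ha0 : a ≠ 0 := fun h => h0 (by rw [← ha, h]; ring)
    obtain ⟨b, hb⟩ : ∃ b : ℂ, b = ((A 0 1 + A 1 0)/2) / a := ⟨_, rfl⟩
    obtain ⟨c, hc⟩ : ∃ c : ℂ, c = (A 0 1 - A 1 0)/2 := ⟨_, rfl⟩
    refine ⟨a, b, c, Or.inl ha0, ?_⟩
    have g1 : A 0 0 = a^2 := ha.symm
    have g2 : A 0 1 = a * b + c := by rw [hb, hc]; field_simp; ring
    have g3 : A 1 0 = a * b - c := by rw [hb, hc]; field_simp; ring
    have g4 : A 1 1 = b^2 := by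
      rw [hb, div_pow, eq_div_iff (pow_ne_zero 2 ha0)]
      linear_combination hdet2 + A 1 1 * ha
    conv_lhs => rw [Matrix.eta_fin_two A, g1, g2, g3, g4]

private lemma stmt15_uniq (a b c : ℂ) (hne : a ≠ 0 ∨ b ≠ 0) (A : Matrix (Fin 2) (Fin 2) ℂ)
    (hA2 : A = !![a^2, a*b + c; a*b - c, b^2]) (q : ℝ) (hq : 0 ≤ q)
    (lam : ℂ) (U : Matrix (Fin 2) (Fin 2) ℂ) (hU : U ∈ Matrix.unitaryGroup (Fin 2) ℂ)
    (heq : !![(1 : ℂ), (q : ℂ); -(q : ℂ), 0] = lam • (Uᵀ * A * U)) :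
    q = ‖c‖ / (Complex.normSq a + Complex.normSq b) := by
  classical
  set s : ℝ := Complex.normSq a + Complex.normSq b with hs
  have hspos : 0 < s := by
    rcases hne with h | h
    · exact add_pos_of_pos_of_nonneg (Complex.normSq_pos.mpr h) (Complex.normSq_nonneg b)
    · exact add_pos_of_nonneg_of_pos (Complex.normSq_nonneg a) (Complex.normSq_pos.mpr h)
  rw [hA2, stmt15_congr_key] at heq
  set x : ℂ := U 0 0 * a + U 1 0 * b with hx
  set y : ℂ := U 0 1 * a + U 1 1 * b with hy
  set d : ℂ := U.det with hd
  have E00 : (1:ℂ) = lam * x^2 := by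
    have := congr_fun (congr_fun heq 0) 0
    simpa [Matrix.smul_apply] using this
  have E01 : (q:ℂ) = lam * (x*y + c*d) := by
    have := congr_fun (congr_fun heq 0) 1
    simpa [Matrix.smul_apply] using this
  have E11 : (0:ℂ) = lam * y^2 := by
    have := congr_fun (congr_fun heq 1) 1
    simpa [Matrix.smul_apply, eq_comm] using this
  have hlam : lam ≠ 0 := by
    intro h
    rw [h, zero_mul] at E00
    exact one_ne_zero E00
  have hy0 : y = 0 := by
    have h2 : lam * y^2 = 0 := E11.symm
    rcases mul_eq_zero.mp h2 with h | h
    · exact absurd h hlam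
    · exact pow_eq_zero_iff (by norm_num) |>.mp h
  have hU2 : U * star U = 1 := Matrix.mem_unitaryGroup_iff.mp hU
  have f00 : U 0 0 * (starRingEnd ℂ) (U 0 0) + U 0 1 * (starRingEnd ℂ) (U 0 1) = 1 := by
    have := congr_fun (congr_fun hU2 0) 0
    simpa [Matrix.mul_apply, Fin.sum_univ_two, Matrix.star_apply, Matrix.one_apply] using this
  have f01 : U 0 0 * (starRingEnd ℂ) (U 1 0) + U 0 1 * (starRingEnd ℂ) (U 1 1) = 0 := by
    have := congr_fun (congr_fun hU2 0) 1
    simpa [Matrix.mul_apply, Fin.sum_univ_two, Matrix.star_apply, Matrix.one_apply] using this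
  have f10 : U 1 0 * (starRingEnd ℂ) (U 0 0) + U 1 1 * (starRingEnd ℂ) (U 0 1) = 0 := by
    have := congr_fun (congr_fun hU2 1) 0
    simpa [Matrix.mul_apply, Fin.sum_univ_two, Matrix.star_apply, Matrix.one_apply] using this
  have f11 : U 1 0 * (starRingEnd ℂ) (U 1 0) + U 1 1 * (starRingEnd ℂ) (U 1 1) = 1 := by
    have := congr_fun (congr_fun hU2 1) 1
    simpa [Matrix.mul_apply, Fin.sum_univ_two, Matrix.star_apply, Matrix.one_apply] using this
  have hpres : x * (starRingEnd ℂ) x + y * (starRingEnd ℂ) y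
      = a * (starRingEnd ℂ) a + b * (starRingEnd ℂ) b := by
    rw [hx, hy]
    simp only [map_add, _root_.map_mul]
    linear_combination (a * (starRingEnd ℂ) a) * f00 + (a * (starRingEnd ℂ) b) * f01
      + (b * (starRingEnd ℂ) a) * f10 + (b * (starRingEnd ℂ) b) * f11
  have hxs : Complex.normSq x = s := by
    have h2 : x * (starRingEnd ℂ) x = (s:ℂ) := by
      rw [hy0] at hpres
      simp only [map_zero, mul_zero, add_zero] at hpres
      rw [hpres, Complex.mul_conj, Complex.mul_conj, hs]
      push_cast
      ring
    rw [Complex.mul_conj] at h2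
    exact_mod_cast h2
  have hdet1 : ‖d‖ = 1 := by
    have h2 : d * (starRingEnd ℂ) d = 1 := by
      have h3 := congr_arg Matrix.det hU2
      rw [Matrix.det_mul, Matrix.det_one, Matrix.star_eq_conjTranspose,
        Matrix.det_conjTranspose] at h3
      rw [hd]
      exact h3
    have h4 : Complex.normSq d = 1 := by
      rw [Complex.mul_conj] at h2
      exact_mod_cast h2
    have := Complex.sq_norm d
    nlinarith [norm_nonneg d]
  have hlam_abs : ‖lam‖ * s = 1 := by
    have h2 := congr_arg (‖·‖) E00
    rw [norm_one, norm_mul, norm_pow] at h2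
    rw [Complex.sq_norm, hxs] at h2
    exact h2.symm
  have hqc : (q:ℂ) = lam * (c * d) := by
    rw [hy0] at E01
    rw [E01]
    ring
  have h2 := congr_arg (‖·‖) hqc
  rw [Complex.norm_real, Real.norm_eq_abs, abs_of_nonneg hq, norm_mul, norm_mul, hdet1, mul_one] at h2
  rw [h2, eq_div_iff hspos.ne']
  rw [mul_comm ‖lam‖ ‖c‖, mul_assoc, hlam_abs, mul_one]

private lemma stmt15_exist (a b c : ℂ) (hne : a ≠ 0 ∨ b ≠ 0) (A : Matrix (Fin 2) (Fin 2) ℂ)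
    (hA2 : A = !![a^2, a*b + c; a*b - c, b^2]) :
    ∃ (lam : ℂ) (U : Matrix (Fin 2) (Fin 2) ℂ),
        U ∈ Matrix.unitaryGroup (Fin 2) ℂ ∧
        !![(1 : ℂ), ((‖c‖ / (Complex.normSq a + Complex.normSq b) : ℝ) : ℂ);
           -((‖c‖ / (Complex.normSq a + Complex.normSq b) : ℝ) : ℂ), 0]
          = lam • (Uᵀ * A * U) := by
  classical
  set s : ℝ := Complex.normSq a + Complex.normSq b with hs
  have hspos : 0 < s := by
    rcases hne with h | h
    · exact add_pos_of_pos_of_nonneg (Complex.normSq_pos.mpr h) (Complex.normSq_nonneg b)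
    · exact add_pos_of_nonneg_of_pos (Complex.normSq_nonneg a) (Complex.normSq_pos.mpr h)
  have hsC : (starRingEnd ℂ) a * a + (starRingEnd ℂ) b * b = (s:ℂ) := by
    rw [hs]
    push_cast
    rw [← Complex.mul_conj, ← Complex.mul_conj]
    ring
  set n : ℝ := Real.sqrt s with hn
  have hnsq : (n:ℂ) * n = (s:ℂ) := by
    rw [← Complex.ofReal_mul, Real.mul_self_sqrt hspos.le]
  have hn0 : (n:ℂ) ≠ 0 := by
    simp only [ne_eq, Complex.ofReal_eq_zero]
    exact (Real.sqrt_pos.mpr hspos).ne'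
  have hnn : (n:ℂ) * n = (starRingEnd ℂ) a * a + (starRingEnd ℂ) b * b := by
    rw [hnsq, hsC]
  set e : ℂ := if c = 0 then 1 else ((‖c‖ : ℝ) : ℂ) / c with he_def
  have he : e * (starRingEnd ℂ) e = 1 := by
    rw [he_def]
    split_ifs with hc
    · simp
    · rw [map_div₀, Complex.conj_ofReal]
      rw [div_mul_div_comm]
      rw [div_eq_one_iff_eq (by simp [hc, (by simpa using hc : (starRingEnd ℂ) c ≠ 0)] :
          c * (starRingEnd ℂ) c ≠ 0)]
      rw [Complex.mul_conj]
      norm_cast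
      rw [← Complex.sq_norm]
      ring
  have hce : c * e = ((‖c‖ : ℝ) : ℂ) := by
    rw [he_def]
    split_ifs with hc
    · simp [hc]
    · field_simp
  refine ⟨(s:ℂ)⁻¹, !![(starRingEnd ℂ) a / n, -(b*e)/n; (starRingEnd ℂ) b / n, a*e/n],
    stmt15_aux_unitary a b e n he hnn hn0, ?_⟩
  have hsC0 : (s:ℂ) ≠ 0 := by
    exact_mod_cast hspos.ne'
  have hnsq2 : ((n:ℝ):ℂ)^2 = (s:ℂ) := by rw [sq, hnsq]
  have key : (starRingEnd ℂ) a / ↑n * a + (starRingEnd ℂ) b / ↑n * b = (s:ℂ)/(n:ℂ) := by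
    rw [div_mul_eq_mul_div, div_mul_eq_mul_div, ← add_div, hsC]
  have hy0 : -(b * e) / (n:ℂ) * a + a * e / (n:ℂ) * b = 0 := by
    field_simp
    ring
  have hd : (starRingEnd ℂ) a / (n:ℂ) * (a * e / (n:ℂ))
      - -(b * e) / (n:ℂ) * ((starRingEnd ℂ) b / (n:ℂ)) = e := by
    field_simp
    linear_combination -e * hnn
  rw [hA2, stmt15_congr_key]
  ext i j
  fin_cases i <;> fin_cases j <;>
    simp [Matrix.det_fin_two_of, Matrix.smul_apply]
  case _ =>
    rw [key, div_pow, hnsq2]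
    field_simp
  case _ =>
    rw [hy0, hd, hce]
    ring
  case _ =>
    rw [hy0, hd, hce]
    ring
  case _ =>
    exact Or.inr hy0

/-- **Normal form under unitary congruence for `2×2` matrices with rank-one symmetric
part**: there is exactly one `q ≥ 0` such that `A` is unitarily congruent, up to a scalar,
to `!![1, q; -q, 0]`; and if `A` is not symmetric, it is congruent to `!![1, 1; -1, 0]`. -/
theorem stmt15 (A : Matrix (Fin 2) (Fin 2) ℂ)
    (hA : (((1 : ℂ) / 2) • (A + Aᵀ)).rank = 1) :
    (∃! qq : ℝ, 0 ≤ qq ∧ ∃ (lam : ℂ) (U : Matrix (Fin 2) (Fin 2) ℂ),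
        U ∈ Matrix.unitaryGroup (Fin 2) ℂ ∧
        !![(1 : ℂ), (qq : ℂ); -(qq : ℂ), 0] = lam • (Uᵀ * A * U)) ∧
    (Aᵀ ≠ A → ∃ T : Matrix (Fin 2) (Fin 2) ℂ, IsUnit T ∧
        Tᵀ * A * T = !![(1 : ℂ), 1; -1, 0]) := by
  classical
  obtain ⟨a, b, c, hne, hA2⟩ := stmt15_decomp A hA
  constructor
  · refine ⟨‖c‖ / (Complex.normSq a + Complex.normSq b),
      ⟨?_, stmt15_exist a b c hne A hA2⟩, ?_⟩
    · apply div_nonneg (norm_nonneg c)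
      exact (add_nonneg (Complex.normSq_nonneg a) (Complex.normSq_nonneg b))
    · rintro q ⟨hq, lam, U, hU, heq⟩
      exact stmt15_uniq a b c hne A hA2 q hq lam U hU heq
  · intro hsym
    have hc : c ≠ 0 := by
      intro h
      apply hsym
      rw [hA2, h]
      ext i j
      fin_cases i <;> fin_cases j <;>
        simp [Matrix.transpose_apply]
    by_cases ha : a = 0
    · have hb : b ≠ 0 := by
        rcases hne with h | h
        · exact absurd ha h
        · exact h
      refine ⟨!![0, -(b/c); 1/b, 0], ?_, ?_⟩
      · apply (Matrix.isUnit_iff_isUnit_det _).mpr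
        apply isUnit_iff_ne_zero.mpr
        rw [Matrix.det_fin_two_of]
        field_simp
        simp [hc]
      · rw [hA2, stmt15_congr_key]
        have hdet : (!![0, -(b/c); 1/b, 0] : Matrix (Fin 2) (Fin 2) ℂ).det = 1/c := by
          rw [Matrix.det_fin_two_of]
          field_simp
          ring
        rw [hdet]
        ext i j
        fin_cases i <;> fin_cases j <;>
          simp [ha] <;> field_simp <;> simp
    · refine ⟨!![1/a, -(b/c); 0, a/c], ?_, ?_⟩
      · apply (Matrix.isUnit_iff_isUnit_det _).mpr
        apply isUnit_iff_ne_zero.mpr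
        rw [Matrix.det_fin_two_of]
        field_simp
        simp [hc]
      · rw [hA2, stmt15_congr_key]
        have hdet : (!![1/a, -(b/c); 0, a/c] : Matrix (Fin 2) (Fin 2) ℂ).det = 1/c := by
          rw [Matrix.det_fin_two_of]
          field_simp
          simp
        rw [hdet]
        ext i j
        fin_cases i <;> fin_cases j <;>
          simp <;> field_simp <;> ring <;> simp
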